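/- Let G be a finite simple connected graph on a vertex set V and let ℓ : V → ℕ be a level function on G, i.e. ℓ v ≥ 1 for all v and for every edge {u, v} of G either ℓ u divides ℓ v with ℓ u < ℓ v, or ℓ v divides ℓ u with ℓ v < ℓ u. Call a vertex v a root if no neighbor u of v has ℓ u < ℓ v, and define the weight w(G) := Σ_{{u,v} ∈ E(G)} max(ℓ u, ℓ v) − Σ_{v ∈ V} ℓ v. If G is not a tree with exactly one root — that is, if G either contains a cycle or has at least two roots — then w(G) ≥ 0. -/

import Mathlib

open scoped Classical in
/-- A chosen strictly smaller neighbor of `v` (or `v` itself if none exists). -/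
noncomputable def nrtwPar {V : Type*} (G : SimpleGraph V) (ℓ : V → ℕ) (v : V) : V :=
  if h : ∃ u, G.Adj u v ∧ ℓ u < ℓ v then h.choose else v

/-- `v` is a root: no neighbor has strictly smaller level. -/
def nrtwRt {V : Type*} (G : SimpleGraph V) (ℓ : V → ℕ) (v : V) : Prop :=
  ¬ ∃ u, G.Adj u v ∧ ℓ u < ℓ v

open scoped Classical in
noncomputable def nrtwStep {V : Type*} (G : SimpleGraph V) (ℓ : V → ℕ) (v : V) : V :=
  if nrtwRt G ℓ v then v else nrtwPar G ℓ v

/-- The root of the component of `v` in the parent forest. -/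
noncomputable def nrtwC {V : Type*} (G : SimpleGraph V) (ℓ : V → ℕ) (v : V) : V :=
  (nrtwStep G ℓ)^[ℓ v] v

def nrtwMax {V : Type*} (ℓ : V → ℕ) : Sym2 V → ℕ :=
  Sym2.lift ⟨fun u v => max (ℓ u) (ℓ v), fun u v => max_comm _ _⟩

section basics

variable {V : Type*} {G : SimpleGraph V} {ℓ : V → ℕ}

lemma nrtwPar_spec {v : V} (hv : ¬ nrtwRt G ℓ v) :
    G.Adj (nrtwPar G ℓ v) v ∧ ℓ (nrtwPar G ℓ v) < ℓ v := by
  have hv' : ∃ u, G.Adj u v ∧ ℓ u < ℓ v := not_not.mp hv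
  rw [nrtwPar, dif_pos hv']
  exact hv'.choose_spec

lemma nrtwStep_root {v : V} (hv : nrtwRt G ℓ v) : nrtwStep G ℓ v = v := by
  rw [nrtwStep, if_pos hv]

lemma nrtwStep_nonroot {v : V} (hv : ¬ nrtwRt G ℓ v) : nrtwStep G ℓ v = nrtwPar G ℓ v := by
  rw [nrtwStep, if_neg hv]

variable (hpos : ∀ v, 1 ≤ ℓ v)
include hpos

lemma nrtwIter_root : ∀ n (v : V), ℓ v ≤ n → nrtwRt G ℓ ((nrtwStep G ℓ)^[n] v) := by
  intro n
  induction n with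
  | zero => intro v hv; exact absurd hv (by have := hpos v; omega)
  | succ n ih =>
    intro v hv
    by_cases hr : nrtwRt G ℓ v
    · rw [Function.iterate_fixed (nrtwStep_root hr) (n+1)]; exact hr
    · rw [Function.iterate_succ_apply, nrtwStep_nonroot hr]
      exact ih _ (by have := (nrtwPar_spec hr).2; omega)

lemma nrtwC_root (v : V) : nrtwRt G ℓ (nrtwC G ℓ v) := nrtwIter_root hpos (ℓ v) v le_rfl

lemma nrtwC_stable : ∀ n (v : V), ℓ v ≤ n → (nrtwStep G ℓ)^[n] v = nrtwC G ℓ v := by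
  intro n v hn
  have h1 : n = (n - ℓ v) + ℓ v := by omega
  calc (nrtwStep G ℓ)^[n] v = (nrtwStep G ℓ)^[(n - ℓ v) + ℓ v] v := by rw [← h1]
    _ = (nrtwStep G ℓ)^[n - ℓ v] ((nrtwStep G ℓ)^[ℓ v] v) := Function.iterate_add_apply _ _ _ _
    _ = (nrtwStep G ℓ)^[n - ℓ v] (nrtwC G ℓ v) := rfl
    _ = nrtwC G ℓ v := Function.iterate_fixed (nrtwStep_root (nrtwC_root hpos v)) _

omit hpos in
lemma nrtwC_fix {v : V} (hv : nrtwRt G ℓ v) : nrtwC G ℓ v = v :=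
  Function.iterate_fixed (nrtwStep_root hv) (ℓ v)

lemma nrtwC_par {v : V} (hv : ¬ nrtwRt G ℓ v) : nrtwC G ℓ v = nrtwC G ℓ (nrtwPar G ℓ v) := by
  have h1 : ℓ v - 1 + 1 = ℓ v := by have := hpos v; omega
  have h2 : ℓ (nrtwPar G ℓ v) ≤ ℓ v - 1 := by have := (nrtwPar_spec hv).2; omega
  calc nrtwC G ℓ v = (nrtwStep G ℓ)^[ℓ v - 1 + 1] v := by rw [h1]; rfl
    _ = (nrtwStep G ℓ)^[ℓ v - 1] (nrtwStep G ℓ v) := Function.iterate_succ_apply _ _ _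
    _ = (nrtwStep G ℓ)^[ℓ v - 1] (nrtwPar G ℓ v) := by rw [nrtwStep_nonroot hv]
    _ = nrtwC G ℓ (nrtwPar G ℓ v) := nrtwC_stable hpos _ _ h2

lemma nrtwC_le (v : V) : ℓ (nrtwC G ℓ v) ≤ ℓ v := by
  have key : ∀ n (v : V), ℓ v ≤ n → ℓ (nrtwC G ℓ v) ≤ ℓ v := by
    intro n
    induction n with
    | zero => intro v hv; exact absurd hv (by have := hpos v; omega)
    | succ n ih =>
      intro v hv
      by_cases hr : nrtwRt G ℓ v
      · rw [nrtwC_fix hr]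
      · rw [nrtwC_par hpos hr]
        have hlt := (nrtwPar_spec hr).2
        exact le_trans (ih _ (by omega)) (le_of_lt hlt)
  exact key (ℓ v) v le_rfl

end basics


/-- Let `G` be a finite connected simple graph with a level function `ℓ`
(each edge joins a vertex to one of strictly larger level divisible by the smaller one).
If `G` is not a tree with exactly one root — i.e. `G` contains a cycle or has at least
two roots (vertices with no neighbor of smaller level) — then the weight
`∑_{{u,v} ∈ E} max(ℓu, ℓv) - ∑_v ℓv` is non-negative. -/
theorem non_rooted_tree_weight_nonneg {V : Type*} [Fintype V] [DecidableEq V]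
    (G : SimpleGraph V) [DecidableRel G.Adj] (hconn : G.Connected)
    (ℓ : V → ℕ) (hpos : ∀ v, 1 ≤ ℓ v)
    (hlev : ∀ u v, G.Adj u v → (ℓ u ∣ ℓ v ∧ ℓ u < ℓ v) ∨ (ℓ v ∣ ℓ u ∧ ℓ v < ℓ u))
    (h : ¬ G.IsAcyclic ∨
      ∃ r₁ r₂ : V, r₁ ≠ r₂ ∧ (∀ u, G.Adj u r₁ → ¬ ℓ u < ℓ r₁) ∧
        (∀ u, G.Adj u r₂ → ¬ ℓ u < ℓ r₂)) :
    0 ≤ (∑ e ∈ G.edgeFinset,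
        Sym2.lift ⟨fun u v => (max (ℓ u) (ℓ v) : ℤ), fun u v => max_comm _ _⟩ e) -
      ∑ v, (ℓ v : ℤ) := by
  classical
  -- divisibility doubling
  have hdouble : ∀ u v, G.Adj u v → ℓ u < ℓ v → 2 * ℓ u ≤ ℓ v := by
    intro u v hadj hlt
    rcases hlev u v hadj with ⟨⟨k, hk⟩, _⟩ | ⟨_, hlt'⟩
    · have hu := hpos u
      rcases k with _ | _ | k
      · omega
      · omega
      · calc 2 * ℓ u ≤ ℓ u * (k + 2) := by nlinarith
          _ = ℓ v := hk.symm
    · omega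
  set N : Finset V := Finset.univ.filter (fun v => ¬ nrtwRt G ℓ v) with hNdef
  set R : Finset V := Finset.univ.filter (fun v => nrtwRt G ℓ v) with hRdef
  set F : V → Sym2 V := fun v => s(nrtwPar G ℓ v, v) with hFdef
  set X : Finset (Sym2 V) := G.edgeFinset \ N.image F with hXdef
  -- parent edges are edges
  have himg : ∀ v ∈ N, F v ∈ G.edgeFinset := by
    intro v hv
    rw [hNdef, Finset.mem_filter] at hv
    exact SimpleGraph.mem_edgeFinset.mpr (nrtwPar_spec hv.2).1
  -- injectivity of the parent-edge map
  have hinj : ∀ x ∈ N, ∀ y ∈ N, F x = F y → x = y := by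
    intro x hx y hy hxy
    rw [hNdef, Finset.mem_filter] at hx hy
    have h1 := (nrtwPar_spec hx.2).2
    have h2 := (nrtwPar_spec hy.2).2
    rcases Sym2.eq_iff.mp hxy with ⟨_, h4⟩ | ⟨h3, h4⟩
    · exact h4
    · rw [h3] at h1; rw [← h4] at h2; omega
  -- key edge inequality
  have hedge : ∀ u v, G.Adj u v → ℓ (nrtwC G ℓ u) + ℓ (nrtwC G ℓ v) ≤ nrtwMax ℓ s(u, v) := by
    have aux : ∀ u v, G.Adj u v → ℓ u < ℓ v →
        ℓ (nrtwC G ℓ u) + ℓ (nrtwC G ℓ v) ≤ ℓ v := by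
      intro u v hadj hlt
      have hvnr : ¬ nrtwRt G ℓ v := fun hr => hr ⟨u, hadj, hlt⟩
      have h1 : 2 * ℓ (nrtwC G ℓ v) ≤ ℓ v := by
        rw [nrtwC_par hpos hvnr]
        have h2 := hdouble _ v (nrtwPar_spec hvnr).1 (nrtwPar_spec hvnr).2
        have h3 := nrtwC_le (G := G) hpos (nrtwPar G ℓ v)
        omega
      have h4 := nrtwC_le (G := G) hpos u
      have h5 := hdouble u v hadj hlt
      omega
    intro u v hadj
    have hm : nrtwMax ℓ s(u, v) = max (ℓ u) (ℓ v) := rfl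
    rcases hlev u v hadj with ⟨_, hlt⟩ | ⟨_, hlt⟩
    · rw [hm, max_eq_right hlt.le]; exact aux u v hadj hlt
    · rw [hm, max_eq_left hlt.le]
      have := aux v u hadj.symm hlt
      omega
  -- the touch relation
  set touch : V → Sym2 V → Prop := fun r e => ∃ x, x ∈ e ∧ nrtwC G ℓ x = r with htouchdef
  -- crossing edges on walks
  have W : ∀ (a b : V) (w : G.Walk a b), nrtwC G ℓ a ≠ nrtwC G ℓ b →
      ∃ x y, G.Adj x y ∧ nrtwC G ℓ x = nrtwC G ℓ a ∧ nrtwC G ℓ x ≠ nrtwC G ℓ y := by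
    intro a b w
    induction w with
    | nil => intro hne; exact absurd rfl hne
    | @cons a c b hadj w ih =>
      intro hne
      by_cases hC : nrtwC G ℓ a = nrtwC G ℓ c
      · obtain ⟨x, y, h1, h2, h3⟩ := ih (by rw [← hC]; exact hne)
        exact ⟨x, y, h1, by rw [h2, ← hC], h3⟩
      · exact ⟨a, c, hadj, rfl, hC⟩
  -- every root's component is touched by an extra edge
  -- a cycle always contains a non-forest edge (via a maximal-level vertex)
  have hkey : ∀ (u : V) (c' : G.Walk u u), c'.IsCycle → (∀ w ∈ c'.support, ℓ w ≤ ℓ u) →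
      (∀ e ∈ c'.edges, e ∈ N.image F) → False := by
    intro u c' hc' hmax hall
    cases c' with
    | nil => exact SimpleGraph.Walk.IsCycle.not_of_nil hc'
    | @cons _ x _ hadj q =>
      rw [SimpleGraph.Walk.cons_isCycle_iff] at hc'
      have claim : ∀ a, G.Adj a u → ℓ a ≤ ℓ u → s(a, u) ∈ N.image F → a = nrtwPar G ℓ u := by
        intro a ha hle hmem
        obtain ⟨v, hvN, hFv⟩ := Finset.mem_image.mp hmem
        have hvnr : ¬ nrtwRt G ℓ v := (Finset.mem_filter.mp hvN).2
        have hlt := (nrtwPar_spec hvnr).2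
        rcases Sym2.eq_iff.mp hFv with ⟨h1, h2⟩ | ⟨h1, h2⟩
        · subst h2; exact h1.symm
        · subst h2; rw [h1] at hlt; omega
      have hqd : q.darts ≠ [] := by
        intro h0
        have hl : q.length = 0 := by rw [← SimpleGraph.Walk.length_darts, h0]; rfl
        exact hadj.ne (SimpleGraph.Walk.eq_of_length_eq_zero hl).symm
      set d := q.darts.getLast hqd with hddef
      have hd2 : d.snd = u := by rw [hddef, SimpleGraph.Walk.getLast_darts_eq_lastDart]; simp
      have hdmem : d ∈ q.darts := List.getLast_mem hqd
      have hde : d.edge ∈ q.edges := List.mem_map_of_mem hdmem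
      have hdedge : d.edge = s(d.fst, u) := by rw [← hd2]; rfl
      -- the first edge
      have hxsup : x ∈ (SimpleGraph.Walk.cons hadj q).support := by
        rw [SimpleGraph.Walk.support_cons]
        exact List.mem_cons_of_mem _ q.start_mem_support
      have h1 : x = nrtwPar G ℓ u := by
        apply claim x hadj.symm (hmax x hxsup)
        apply hall
        rw [SimpleGraph.Walk.edges_cons, Sym2.eq_swap]
        exact List.mem_cons_self
      -- the last edge
      have hdsup : d.fst ∈ (SimpleGraph.Walk.cons hadj q).support := by
        rw [SimpleGraph.Walk.support_cons]
        exact List.mem_cons_of_mem _ (SimpleGraph.Walk.dart_fst_mem_support_of_mem_darts q hdmem)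
      have hdadj : G.Adj d.fst u := by rw [← hd2]; exact d.adj
      have h2 : d.fst = nrtwPar G ℓ u := by
        apply claim d.fst hdadj (hmax d.fst hdsup)
        apply hall
        rw [SimpleGraph.Walk.edges_cons, ← hdedge]
        exact List.mem_cons_of_mem _ hde
      -- contradiction: the first edge already occurs in q
      apply hc'.2
      have : s(u, x) = d.edge := by rw [hdedge, h1, h2, Sym2.eq_swap]
      rw [this]
      exact hde
  have hcover : ∀ r ∈ R, ∃ e ∈ X, touch r e := by
    intro r hr
    have hrR : nrtwRt G ℓ r := (Finset.mem_filter.mp hr).2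
    by_cases hex : ∃ r' ∈ R, r' ≠ r
    · obtain ⟨r', hr', hne⟩ := hex
      have hr'R : nrtwRt G ℓ r' := (Finset.mem_filter.mp hr').2
      obtain ⟨w⟩ := hconn.preconnected r r'
      have hCr : nrtwC G ℓ r = r := nrtwC_fix hrR
      have hCr' : nrtwC G ℓ r' = r' := nrtwC_fix hr'R
      obtain ⟨x, y, hadj, hx, hxy⟩ := W r r' w (by rw [hCr, hCr']; exact fun hh => hne hh.symm)
      refine ⟨s(x, y), ?_, ⟨x, Sym2.mem_mk_left x y, by rw [hx, hCr]⟩⟩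
      rw [hXdef, Finset.mem_sdiff]
      refine ⟨SimpleGraph.mem_edgeFinset.mpr hadj, ?_⟩
      intro hmem
      obtain ⟨v, hvN, hFv⟩ := Finset.mem_image.mp hmem
      have hvnr : ¬ nrtwRt G ℓ v := (Finset.mem_filter.mp hvN).2
      have hCC : nrtwC G ℓ (nrtwPar G ℓ v) = nrtwC G ℓ v := (nrtwC_par hpos hvnr).symm
      rcases Sym2.eq_iff.mp hFv with ⟨h1, h2⟩ | ⟨h1, h2⟩
      · apply hxy; rw [← h1, ← h2]; exact hCC
      · apply hxy; rw [← h1, ← h2]; exact hCC.symm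
    · push_neg at hex
      have hall : ∀ v : V, nrtwC G ℓ v = r := fun v =>
        hex _ (Finset.mem_filter.mpr ⟨Finset.mem_univ _, nrtwC_root hpos v⟩)
      have hXne : X.Nonempty := by
        rcases h with hcyc | ⟨r₁, r₂, hne, h1, h2⟩
        · by_contra hXe
          rw [Finset.not_nonempty_iff_eq_empty, hXdef,
            Finset.sdiff_eq_empty_iff_subset] at hXe
          apply hcyc
          intro v0 c hc
          obtain ⟨u, hu, hmax⟩ := Finset.exists_max_image c.support.toFinset ℓ
            ⟨v0, List.mem_toFinset.mpr c.start_mem_support⟩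
          rw [List.mem_toFinset] at hu
          apply hkey u (c.rotate u hu) (hc.rotate hu)
          · intro w hw
            apply hmax
            rw [List.mem_toFinset]
            rcases List.eq_or_mem_of_mem_cons
              ((c.rotate u hu).support_eq_cons ▸ hw) with rfl | hw'
            · exact hu
            · have := (SimpleGraph.Walk.support_rotate c u hu).mem_iff.mp hw'
              exact List.tail_sublist _ |>.subset this
          · intro e hee
            exact hXe (SimpleGraph.mem_edgeFinset.mpr
              ((c.rotate u hu).edges_subset_edgeSet hee))
        · exfalso
          have hr₁ : nrtwRt G ℓ r₁ := fun ⟨u, ha, hl⟩ => h1 u ha hl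
          have hr₂ : nrtwRt G ℓ r₂ := fun ⟨u, ha, hl⟩ => h2 u ha hl
          have e1 : r₁ = r := hex _ (Finset.mem_filter.mpr ⟨Finset.mem_univ _, hr₁⟩)
          have e2 : r₂ = r := hex _ (Finset.mem_filter.mpr ⟨Finset.mem_univ _, hr₂⟩)
          exact hne (e1.trans e2.symm)
      obtain ⟨e, he⟩ := hXne
      have hx : ∃ x, x ∈ e := Sym2.ind (fun a b => ⟨a, Sym2.mem_mk_left a b⟩) e
      obtain ⟨x, hxe⟩ := hx
      exact ⟨e, he, ⟨x, hxe, hall x⟩⟩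
  -- per-extra-edge bound
  have hperedge' : ∀ u v, G.Adj u v →
      ∑ r ∈ R.filter (fun r => touch r s(u, v)), ℓ r ≤ nrtwMax ℓ s(u, v) := by
    intro u v hadj
    have hsub : (R.filter (fun r => touch r s(u, v))) ⊆ {nrtwC G ℓ u, nrtwC G ℓ v} := by
      intro r hr
      rw [Finset.mem_filter] at hr
      obtain ⟨x, hx, hcx⟩ := hr.2
      rcases Sym2.mem_iff.mp hx with rfl | rfl
      · exact Finset.mem_insert.mpr (Or.inl hcx.symm)
      · exact Finset.mem_insert.mpr (Or.inr (Finset.mem_singleton.mpr hcx.symm))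
    calc ∑ r ∈ R.filter (fun r => touch r s(u, v)), ℓ r
        ≤ ∑ r ∈ ({nrtwC G ℓ u, nrtwC G ℓ v} : Finset V), ℓ r :=
          Finset.sum_le_sum_of_subset hsub
      _ ≤ ℓ (nrtwC G ℓ u) + ℓ (nrtwC G ℓ v) := by
          by_cases hC : nrtwC G ℓ u = nrtwC G ℓ v
          · simp [hC]
          · rw [Finset.sum_pair hC]
      _ ≤ nrtwMax ℓ s(u, v) := hedge u v hadj
  have hperedge : ∀ e ∈ X, ∑ r ∈ R.filter (fun r => touch r e), ℓ r ≤ nrtwMax ℓ e := by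
    intro e he
    have heE : e ∈ G.edgeSet := SimpleGraph.mem_edgeFinset.mp ((Finset.mem_sdiff.mp he).1)
    clear he
    revert heE
    induction e using Sym2.ind with
    | _ u v => intro heE; exact hperedge' u v heE
  -- main chain
  have e4 : ∑ r ∈ R, ℓ r ≤ ∑ e ∈ X, nrtwMax ℓ e := by
    calc ∑ r ∈ R, ℓ r ≤ ∑ r ∈ R, ∑ e ∈ X, (if touch r e then ℓ r else 0) := by
          apply Finset.sum_le_sum
          intro r hr
          obtain ⟨e, he, ht⟩ := hcover r hr
          calc ℓ r = (if touch r e then ℓ r else 0) := (if_pos ht).symm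
            _ ≤ ∑ e ∈ X, (if touch r e then ℓ r else 0) :=
              Finset.single_le_sum (f := fun e => if touch r e then ℓ r else 0)
                (fun i _ => Nat.zero_le _) he
      _ = ∑ e ∈ X, ∑ r ∈ R, (if touch r e then ℓ r else 0) := Finset.sum_comm
      _ ≤ ∑ e ∈ X, nrtwMax ℓ e := by
          apply Finset.sum_le_sum
          intro e he
          rw [← Finset.sum_filter]
          exact hperedge e he
  -- assemble
  have e2 : ∑ e ∈ N.image F, nrtwMax ℓ e = ∑ v ∈ N, ℓ v := by
    rw [Finset.sum_image hinj]
    apply Finset.sum_congr rfl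
    intro v hv
    rw [hNdef, Finset.mem_filter] at hv
    have hlt := (nrtwPar_spec hv.2).2
    have hm : nrtwMax ℓ (F v) = max (ℓ (nrtwPar G ℓ v)) (ℓ v) := rfl
    rw [hm]
    exact max_eq_right hlt.le
  have e3 : ∑ e ∈ X, nrtwMax ℓ e + ∑ e ∈ N.image F, nrtwMax ℓ e
      = ∑ e ∈ G.edgeFinset, nrtwMax ℓ e :=
    Finset.sum_sdiff (fun e he => by obtain ⟨v, hv, rfl⟩ := Finset.mem_image.mp he; exact himg v hv)
  have e1 : ∑ v ∈ R, ℓ v + ∑ v ∈ N, ℓ v = ∑ v, ℓ v :=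
    Finset.sum_filter_add_sum_filter_not _ _ _
  have key : ∑ v, ℓ v ≤ ∑ e ∈ G.edgeFinset, nrtwMax ℓ e := by omega
  have cast1 : ∑ e ∈ G.edgeFinset,
      Sym2.lift ⟨fun u v => (max (ℓ u) (ℓ v) : ℤ), fun u v => max_comm _ _⟩ e
      = ((∑ e ∈ G.edgeFinset, nrtwMax ℓ e : ℕ) : ℤ) := by
    rw [Nat.cast_sum]
    apply Finset.sum_congr rfl
    intro e _
    induction e using Sym2.ind with
    | _ u v => simp [nrtwMax]
  rw [cast1, sub_nonneg]
  exact_mod_cast key
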